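/- Let x and y be vectors in ℝⁿ and let a, b, c be real numbers with a > 0, c ≥ 0, and a·b ≥ 2c. Then (a·y + b·x)·(a·y + b·x)ᵀ ⪰ 2·(a·b − c)·(x·yᵀ + y·xᵀ) in the Loewner order. -/

import Mathlib

open Matrix

theorem stmt_7 (n : ℕ) (x y : Fin n → ℝ) (a b c : ℝ)
    (ha : 0 < a) (hc : 0 ≤ c) (hab : 2 * c ≤ a * b) :
    (Matrix.vecMulVec (a • y + b • x) (a • y + b • x) -
      (2 * (a * b - c)) • (Matrix.vecMulVec x y + Matrix.vecMulVec y x)).PosSemidef := by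
  rw [Matrix.posSemidef_iff_dotProduct_mulVec]
  constructor
  · ext i j
    simp [Matrix.vecMulVec_apply]
    ring
  · intro z
    have key : ∀ (u v : Fin n → ℝ), z ⬝ᵥ (vecMulVec u v) *ᵥ z = (u ⬝ᵥ z) * (v ⬝ᵥ z) := by
      intro u v
      simp [dotProduct, vecMulVec_apply, mulVec, Finset.mul_sum, Finset.sum_mul]
      rw [Finset.sum_comm]
      congr 1; ext i; congr 1; ext j; ring
    set s := x ⬝ᵥ z
    set t := y ⬝ᵥ z
    have h1 : star z ⬝ᵥ (Matrix.vecMulVec (a • y + b • x) (a • y + b • x) -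
      (2 * (a * b - c)) • (Matrix.vecMulVec x y + Matrix.vecMulVec y x)) *ᵥ z
        = (a*t+b*s)^2 - 2*(a*b-c)*(s*t + t*s) := by
      simp [Matrix.sub_mulVec, Matrix.add_mulVec, Matrix.smul_mulVec, dotProduct_sub,
        dotProduct_add, dotProduct_smul, key, smul_dotProduct, add_dotProduct, smul_eq_mul]
      ring
    rw [h1]
    rcases le_or_gt 0 (s*t) with h | h
    · nlinarith [sq_nonneg (a*t - b*s)]
    · nlinarith [sq_nonneg (a*t), sq_nonneg (b*s)]
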